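/- arXiv:0806.0204 — 3 statements merged into one kernel-verified Lean document; each statement's English description precedes it below -/
import Mathlib

section
/- Suppose Ψ(x, y, λ) solves (∂_y − λ ∂_x) Ψ = (∂_x Q) Ψ with ∂_x Q valued in su(n), and the boundary value problem with Ψ → 1 as y → −∞ has a unique bounded solution for each λ ∈ ℂ \ ℝ. Then the reality condition Ψ(x, y, λ) · Ψ(x, y, λ̄)* = I holds, where * denotes conjugate transpose. -/
open Filter Matrix

attribute [local instance] Matrix.normedAddCommGroup Matrix.normedSpace

noncomputable section

/-- A bounded solution of the boundary value problem
`(∂_y − λ ∂_x) F = (∂_x Q) F`, `F → 1` as `y → −∞`. -/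
def IsBVPSol {n : ℕ} (lam : ℂ) (Qx : ℝ → ℝ → Matrix (Fin n) (Fin n) ℂ)
    (F : ℝ → ℝ → Matrix (Fin n) (Fin n) ℂ) : Prop :=
  (∀ y, Differentiable ℝ fun x => F x y) ∧
  (∀ x, Differentiable ℝ fun y => F x y) ∧
  (∀ x y, deriv (fun t => F x t) y - lam • deriv (fun s => F s y) x = Qx x y * F x y) ∧
  (∀ x, Tendsto (fun y => F x y) atBot (nhds 1)) ∧
  (∃ C : ℝ, ∀ x y, ‖F x y‖ ≤ C)

section
attribute [-instance] instTopologicalSpaceMatrix Matrix.instUniformSpace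

def mulCLM (n : ℕ) : Matrix (Fin n) (Fin n) ℂ →L[ℝ] Matrix (Fin n) (Fin n) ℂ →L[ℝ] Matrix (Fin n) (Fin n) ℂ :=
  LinearMap.toContinuousLinearMap
    { toFun := fun A => LinearMap.toContinuousLinearMap ((LinearMap.mul ℝ (Matrix (Fin n) (Fin n) ℂ)) A)
      map_add' := fun A B => by ext C; simp [add_mul]
      map_smul' := fun r A => by ext C; simp [smul_mul_assoc] }

@[simp] lemma mulCLM_apply {n : ℕ} (A B : Matrix (Fin n) (Fin n) ℂ) : mulCLM n A B = A * B := rfl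

def starCLM (n : ℕ) : Matrix (Fin n) (Fin n) ℂ →L[ℝ] Matrix (Fin n) (Fin n) ℂ :=
  LinearMap.toContinuousLinearMap
    { toFun := fun A => Aᴴ
      map_add' := fun A B => Matrix.conjTranspose_add A B
      map_smul' := fun r A => by simp [Matrix.conjTranspose_smul] }

@[simp] lemma starCLM_apply {n : ℕ} (A : Matrix (Fin n) (Fin n) ℂ) : starCLM n A = Aᴴ := rfl

lemma HasDerivAt.matMul {n : ℕ} {f g : ℝ → Matrix (Fin n) (Fin n) ℂ}
    {f' g' : Matrix (Fin n) (Fin n) ℂ} {t : ℝ}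
    (hf : HasDerivAt f f' t) (hg : HasDerivAt g g' t) :
    HasDerivAt (fun s => f s * g s) (f' * g t + f t * g') t := by
  have hc : HasDerivAt (fun s => mulCLM n (f s)) (mulCLM n f') t :=
    (mulCLM n).hasFDerivAt.comp_hasDerivAt t hf
  simpa using hc.clm_apply hg

lemma HasDerivAt.matStar {n : ℕ} {f : ℝ → Matrix (Fin n) (Fin n) ℂ}
    {f' : Matrix (Fin n) (Fin n) ℂ} {t : ℝ} (hf : HasDerivAt f f' t) :
    HasDerivAt (fun s => (f s)ᴴ) f'ᴴ t := by
  exact (starCLM n).hasFDerivAt.comp_hasDerivAt t hf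

end

lemma tendsto_matMul {n : ℕ} {α : Type*} {l : Filter α}
    {f g : α → Matrix (Fin n) (Fin n) ℂ} {a b : Matrix (Fin n) (Fin n) ℂ}
    (hf : Tendsto f l (nhds a)) (hg : Tendsto g l (nhds b)) :
    Tendsto (fun s => f s * g s) l (nhds (a * b)) := by
  exact hf.mul hg

/-- Suppose `Ψ(x, y, λ)` solves `(∂_y − λ ∂_x)Ψ = (∂_x Q)Ψ` with `∂_x Q`
valued in `su(n)` (skew-Hermitian), `Ψ → 1` as `y → −∞`, each `Ψ(x,y,λ)` invertible, and
the boundary value problem has a unique bounded solution for each `λ ∈ ℂ \ ℝ`.  Then the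
reality condition `Ψ(x, y, λ) · Ψ(x, y, λ̄)* = I` holds. -/
theorem reality_condition
    {n : ℕ} (Ψ : ℝ → ℝ → ℂ → Matrix (Fin n) (Fin n) ℂ)
    (Qx : ℝ → ℝ → Matrix (Fin n) (Fin n) ℂ)
    (hskew : ∀ x y, (Qx x y)ᴴ = -Qx x y)
    (hΨinv : ∀ x y (lam : ℂ), lam.im ≠ 0 → IsUnit (Ψ x y lam))
    (hsol : ∀ lam : ℂ, lam.im ≠ 0 → IsBVPSol lam Qx (fun x y => Ψ x y lam))
    (huniq : ∀ lam : ℂ, lam.im ≠ 0 →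
      ∀ F : ℝ → ℝ → Matrix (Fin n) (Fin n) ℂ,
        IsBVPSol lam Qx F → F = fun x y => Ψ x y lam) :
    ∀ (lam : ℂ), lam.im ≠ 0 →
      ∀ x y : ℝ, Ψ x y lam * (Ψ x y (starRingEnd ℂ lam))ᴴ = 1 := by
  intro lam hlam x₀ y₀
  set mu := starRingEnd ℂ lam with hmu_def
  have hmu : mu.im ≠ 0 := by
    simpa [hmu_def, Complex.conj_im] using neg_ne_zero.mpr hlam
  obtain ⟨hBx, hBy, hBpde, hBlim, CB, hCB⟩ := hsol lam hlam
  obtain ⟨hAx, hAy, hApde, hAlim, CA, hCA⟩ := hsol mu hmu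
  set A : ℝ → ℝ → Matrix (Fin n) (Fin n) ℂ := fun x y => (Ψ x y mu)ᴴ with hA_def
  set B : ℝ → ℝ → Matrix (Fin n) (Fin n) ℂ := fun x y => Ψ x y lam with hB_def
  set F : ℝ → ℝ → Matrix (Fin n) (Fin n) ℂ := fun x y => B x y * (A x y * B x y) with hF_def
  -- pointwise derivatives
  have hBX : ∀ x y, HasDerivAt (fun s => B s y) (deriv (fun s => B s y) x) x :=
    fun x y => ((hBx y) x).hasDerivAt
  have hBY : ∀ x y, HasDerivAt (fun t => B x t) (deriv (fun t => B x t) y) y :=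
    fun x y => ((hBy x) y).hasDerivAt
  have hAX : ∀ x y, HasDerivAt (fun s => A s y) ((deriv (fun s => Ψ s y mu) x)ᴴ) x :=
    fun x y => (((hAx y) x).hasDerivAt).matStar
  have hAY : ∀ x y, HasDerivAt (fun t => A x t) ((deriv (fun t => Ψ x t mu) y)ᴴ) y :=
    fun x y => (((hAy x) y).hasDerivAt).matStar
  -- PDE for A : ∂_y A − lam • ∂_x A = −(A Qx)
  have hApde' : ∀ x y,
      (deriv (fun t => Ψ x t mu) y)ᴴ - lam • (deriv (fun s => Ψ s y mu) x)ᴴ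
        = -(A x y * Qx x y) := by
    intro x y
    have h := hApde x y
    have h2 := congrArg Matrix.conjTranspose h
    simpa [Matrix.conjTranspose_sub, Matrix.conjTranspose_smul, Matrix.conjTranspose_mul,
      hskew x y, hmu_def, Matrix.mul_neg, hA_def] using h2
  -- derivatives of F
  have hFX : ∀ x y, HasDerivAt (fun s => F s y)
      (deriv (fun s => B s y) x * (A x y * B x y)
        + B x y * ((deriv (fun s => Ψ s y mu) x)ᴴ * B x y + A x y * deriv (fun s => B s y) x)) x :=
    fun x y => (hBX x y).matMul ((hAX x y).matMul (hBX x y))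
  have hFY : ∀ x y, HasDerivAt (fun t => F x t)
      (deriv (fun t => B x t) y * (A x y * B x y)
        + B x y * ((deriv (fun t => Ψ x t mu) y)ᴴ * B x y + A x y * deriv (fun t => B x t) y)) y :=
    fun x y => (hBY x y).matMul ((hAY x y).matMul (hBY x y))
  -- F solves the BVP at lam
  have hFsol : IsBVPSol lam Qx F := by
    refine ⟨fun y x => (hFX x y).differentiableAt, fun x y => (hFY x y).differentiableAt,
      ?_, ?_, ?_⟩
    · intro x y
      erw [(hFY x y).deriv, (hFX x y).deriv]
      set bX := deriv (fun s => B s y) x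
      set bY := deriv (fun t => B x t) y
      set aX := (deriv (fun s => Ψ s y mu) x)ᴴ
      set aY := (deriv (fun t => Ψ x t mu) y)ᴴ
      have hu : bY - lam • bX = Qx x y * B x y := hBpde x y
      have hv : aY - lam • aX = -(A x y * Qx x y) := hApde' x y
      have expand :
          bY * (A x y * B x y) + B x y * (aY * B x y + A x y * bY)
            - lam • (bX * (A x y * B x y) + B x y * (aX * B x y + A x y * bX))
          = (bY - lam • bX) * (A x y * B x y)
            + B x y * ((aY - lam • aX) * B x y + A x y * (bY - lam • bX)) := by
        simp only [sub_mul, mul_sub, mul_add, add_mul, smul_add, Matrix.smul_mul,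
          Matrix.mul_smul]
        abel
      rw [expand, hu, hv]
      simp only [Matrix.neg_mul, Matrix.mul_neg, hF_def]
      rw [Matrix.mul_assoc (Qx x y) (B x y) (A x y * B x y)]
      rw [Matrix.mul_assoc (A x y) (Qx x y) (B x y)]
      simp
    · intro x
      have hAt : Tendsto (fun y => A x y) atBot (nhds 1) := by
        have := ((starCLM n).continuous.tendsto 1).comp (hAlim x)
        have h1 : starCLM n 1 = 1 := by simp
        rw [h1] at this
        exact this
      have := tendsto_matMul (hBlim x) (tendsto_matMul hAt (hBlim x))
      simpa [hF_def] using this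
    · -- boundedness
      have hCA0 : (0 : ℝ) ≤ CA := le_trans (norm_nonneg _) (hCA 0 0)
      have hCB0 : (0 : ℝ) ≤ CB := le_trans (norm_nonneg _) (hCB 0 0)
      set K := ‖mulCLM n‖ with hK
      set S := ‖starCLM n‖ with hS
      have hK0 : 0 ≤ K := by rw [hK]; exact norm_nonneg (mulCLM n)
      have hS0 : 0 ≤ S := by rw [hS]; exact norm_nonneg (starCLM n)
      have hmulle : ∀ X Y : Matrix (Fin n) (Fin n) ℂ, ‖X * Y‖ ≤ K * ‖X‖ * ‖Y‖ := by
        intro X Y; simpa using (mulCLM n).le_opNorm₂ X Y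
      have hAle : ∀ x y, ‖A x y‖ ≤ S * CA := by
        intro x y
        calc ‖A x y‖ = ‖starCLM n (Ψ x y mu)‖ := by simp [hA_def]
          _ ≤ S * ‖Ψ x y mu‖ := (starCLM n).le_opNorm _
          _ ≤ S * CA := by
              have := hCA x y
              exact mul_le_mul_of_nonneg_left this hS0
      refine ⟨K * CB * (K * (S * CA) * CB), fun x y => ?_⟩
      have h1 : ‖A x y * B x y‖ ≤ K * (S * CA) * CB := by
        calc ‖A x y * B x y‖ ≤ K * ‖A x y‖ * ‖B x y‖ := hmulle _ _
          _ ≤ K * (S * CA) * CB := by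
              have hA' := hAle x y
              have hB' := hCB x y
              have : K * ‖A x y‖ ≤ K * (S * CA) := mul_le_mul_of_nonneg_left hA' hK0
              exact mul_le_mul this hB' (norm_nonneg _)
                (by positivity)
      calc ‖F x y‖ ≤ K * ‖B x y‖ * ‖A x y * B x y‖ := hmulle _ _
        _ ≤ K * CB * (K * (S * CA) * CB) := by
            have : K * ‖B x y‖ ≤ K * CB := mul_le_mul_of_nonneg_left (hCB x y) hK0
            exact mul_le_mul this h1 (norm_nonneg _) (by positivity)
  -- uniqueness
  have hFeq := huniq lam hlam F hFsol
  have hpt : B x₀ y₀ * (A x₀ y₀ * B x₀ y₀) = B x₀ y₀ := by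
    have := congrFun (congrFun hFeq x₀) y₀
    simpa [hF_def, hB_def] using this
  have hcancel : A x₀ y₀ * B x₀ y₀ = 1 := by
    apply (hΨinv x₀ y₀ lam hlam).mul_left_cancel
    simpa [hB_def] using hpt
  have := mul_eq_one_comm.mp hcancel
  simpa [hA_def, hB_def] using this

end
end

section
/- Let d, n be n × n complex matrices with n invertible such that (d n^{-1})² = 0, and let α be invertible. If c, b are matrices satisfying b α d + c (β d + α n) = 0 for some matrix β, then automatically c α d = 0; that is, the first family of equations in the residue linear system is a consequence of the second whenever (d n^{-1})² = 0. -/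
open Matrix

/-- Let `d, N ∈ M_n(ℂ)` with `N` invertible and `(d N⁻¹)² = 0`, and let
`α` be invertible.  If `b α d + c (β d + α N) = 0`, then automatically `c α d = 0`:
the first family of residue equations is a consequence of the second. -/
theorem residue_first_equation_consequence
    {n : ℕ} (d N α β b c : Matrix (Fin n) (Fin n) ℂ)
    (hN : IsUnit N) (hα : IsUnit α)
    (hnil : (d * N⁻¹) ^ 2 = 0)
    (h : b * α * d + c * (β * d + α * N) = 0) :
    c * α * d = 0 := by
  have hdet : IsUnit N.det := (Matrix.isUnit_iff_isUnit_det N).mp hN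
  have hNN : N * N⁻¹ = 1 := Matrix.mul_nonsing_inv N hdet
  have hNN' : N⁻¹ * N = 1 := Matrix.nonsing_inv_mul N hdet
  have hd : d * N⁻¹ * d = 0 := by
    have h1 := congrArg (· * N) hnil
    simp only [pow_two] at h1
    calc d * N⁻¹ * d = d * N⁻¹ * d * (N⁻¹ * N) := by rw [hNN', mul_one]
      _ = (d * N⁻¹ * (d * N⁻¹)) * N := by noncomm_ring
      _ = 0 := by rw [← pow_two, hnil, zero_mul]
  have h2 : c * (α * N) = -(b * α * d + c * (β * d)) := by
    have := h
    rw [mul_add] at this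
    linear_combination (norm := noncomm_ring) this
  calc c * α * d = c * (α * N) * (N⁻¹ * d) := by
        rw [show c * (α * N) * (N⁻¹ * d) = c * α * (N * N⁻¹) * d by noncomm_ring, hNN, mul_one]
    _ = -(b * α * d + c * (β * d)) * (N⁻¹ * d) := by rw [h2]
    _ = -(b * α * (d * N⁻¹ * d) + c * β * (d * N⁻¹ * d)) := by noncomm_ring
    _ = 0 := by rw [hd]; simp
end

section
/- Let f : ℝ² × ℂ⁺ → M_n(ℂ) be given for Im λ > 0 by f(x, y, λ) = 1 + (1/(2πi)) ∫_ℝ F̃(t, λ)/(t − (x + λ y)) dt, where F̃(·, λ) ∈ L¹ ∩ L²(ℝ) uniformly with ‖F̃(·, λ)‖_{L¹∩L²} → 0 as |λ| → ∞, and suppose F̃(·, λ) is uniformly Hölder continuous in t. Then f(x, y, λ) → 1 uniformly in (x, y) as |λ| → ∞. -/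
open Matrix Filter MeasureTheory Real

attribute [local instance] Matrix.normedAddCommGroup Matrix.normedSpace

noncomputable section

def matrixContinuousENormAux {m k : Type*} [Fintype m] [Fintype k] :
    ContinuousENorm (Matrix m k ℂ) := SeminormedAddGroup.toContinuousENorm

theorem matrixPseudoMetrizableAux {m k : Type*} [Fintype m] [Fintype k] :
    TopologicalSpace.PseudoMetrizableSpace (Matrix m k ℂ) :=
  @UniformSpace.pseudoMetrizableSpace (Matrix m k ℂ) PseudoMetricSpace.toUniformSpace _

/-- Hölder continuity implies continuity. -/
lemma holder_continuous_aux {E : Type*} [NormedAddCommGroup E] (f : ℝ → E) {α C : ℝ}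
    (hα : 0 < α) (h : ∀ t s : ℝ, ‖f t - f s‖ ≤ C * |t - s| ^ α) : Continuous f := by
  rw [continuous_iff_continuousAt]
  intro s
  rw [ContinuousAt, tendsto_iff_norm_sub_tendsto_zero]
  have hb : Tendsto (fun t : ℝ => C * |t - s| ^ α) (nhds s) (nhds 0) := by
    have h1 : Tendsto (fun t : ℝ => |t - s|) (nhds s) (nhds 0) := by
      have : Tendsto (fun t : ℝ => t - s) (nhds s) (nhds (s - s)) :=
        (continuous_id.sub continuous_const).tendsto s
      rw [sub_self] at this
      simpa using this.abs
    have h2 : Tendsto (fun x : ℝ => x ^ α) (nhds 0) (nhds 0) := by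
      have := (Real.continuousAt_rpow_const 0 α (Or.inr hα.le)).tendsto
      rwa [Real.zero_rpow hα.ne'] at this
    have := (h2.comp h1).const_mul C
    simpa using this
  exact squeeze_zero (fun t => norm_nonneg _) (fun t => h t s) hb

/-- Pointwise bound from L¹-norm plus Hölder continuity. -/
lemma pointwise_bound_aux {E : Type*} [NormedAddCommGroup E] {f : ℝ → E} {α C : ℝ}
    (hα : 0 < α) (hC : 0 < C)
    (h : ∀ t s : ℝ, ‖f t - f s‖ ≤ C * |t - s| ^ α) (t₀ : ℝ) :
    ENNReal.ofReal (‖f t₀‖ * (‖f t₀‖ / (2 * C)) ^ (1 / α)) ≤ eLpNorm f 1 volume := by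
  set s := ‖f t₀‖ with hs
  rcases eq_or_lt_of_le (norm_nonneg (f t₀)) with h0 | h0
  · simp [hs, ← h0]
  set δ := (s / (2 * C)) ^ (1 / α) with hδ
  have hδpos : 0 < δ := Real.rpow_pos_of_pos (div_pos h0 (by positivity)) _
  have hδα : δ ^ α = s / (2 * C) := by
    rw [hδ, ← Real.rpow_mul (by positivity), one_div, inv_mul_cancel₀ hα.ne', Real.rpow_one]
  have hlow : ∀ u ∈ Set.Icc (t₀ - δ) (t₀ + δ), s / 2 ≤ ‖f u‖ := by
    intro u hu
    have h1 : ‖f t₀ - f u‖ ≤ C * |t₀ - u| ^ α := h t₀ u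
    have h2 : |t₀ - u| ≤ δ := by
      rw [abs_le]; exact ⟨by linarith [hu.2], by linarith [hu.1]⟩
    have h3 : |t₀ - u| ^ α ≤ δ ^ α :=
      Real.rpow_le_rpow (abs_nonneg _) h2 hα.le
    have h4 : ‖f t₀‖ - ‖f u‖ ≤ C * (s / (2 * C)) := by
      calc ‖f t₀‖ - ‖f u‖ ≤ ‖f t₀ - f u‖ := norm_sub_norm_le _ _
        _ ≤ C * |t₀ - u| ^ α := h1
        _ ≤ C * δ ^ α := by nlinarith
        _ = C * (s / (2 * C)) := by rw [hδα]
    have h5 : C * (s / (2 * C)) = s / 2 := by field_simp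
    rw [h5] at h4
    rw [← hs] at h4
    linarith
  calc ENNReal.ofReal (s * δ)
      = ENNReal.ofReal (s / 2) * volume (Set.Icc (t₀ - δ) (t₀ + δ)) := by
        rw [Real.volume_Icc, ← ENNReal.ofReal_mul (by positivity)]
        ring_nf
    _ = ∫⁻ _ in Set.Icc (t₀ - δ) (t₀ + δ), ENNReal.ofReal (s / 2) ∂volume := by
        rw [setLIntegral_const]
    _ ≤ ∫⁻ u in Set.Icc (t₀ - δ) (t₀ + δ), (‖f u‖₊ : ENNReal) ∂volume := by
        apply lintegral_mono_ae
        rw [ae_restrict_iff' measurableSet_Icc]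
        filter_upwards with u hu
        rw [← enorm_eq_nnnorm, ← ofReal_norm]
        exact ENNReal.ofReal_le_ofReal (hlow u hu)
    _ ≤ ∫⁻ u, (‖f u‖₊ : ENNReal) ∂volume := setLIntegral_le_lintegral _ _
    _ = eLpNorm f 1 volume := by rw [eLpNorm_one_eq_lintegral_enorm]; simp only [enorm_eq_nnnorm]

/-- The odd kernel integrates to zero on a symmetric interval. -/
lemma intervalIntegral_inv_real_zero (x r : ℝ) :
    (∫ t in x - r..x + r, ((t : ℂ) - (x : ℂ))⁻¹) = 0 := by
  have h1 : (∫ t in x - r..x + r, ((t : ℂ) - (x : ℂ))⁻¹)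
      = ∫ s in -r..r, ((s : ℂ))⁻¹ := by
    have := intervalIntegral.integral_comp_sub_right (a := x - r) (b := x + r)
      (fun s : ℝ => ((s : ℂ))⁻¹) x
    simp only [sub_sub_cancel_left, add_sub_cancel_left] at this
    rw [← this]
    congr 1
    ext t
    push_cast
    ring_nf
  rw [h1]
  have h2 := intervalIntegral.integral_comp_neg (a := -r) (b := r)
    (fun s : ℝ => ((s : ℂ))⁻¹)
  simp only [neg_neg] at h2
  have h3 : (∫ s in -r..r, ((-s : ℝ) : ℂ)⁻¹) = - ∫ s in -r..r, ((s : ℂ))⁻¹ := by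
    rw [← intervalIntegral.integral_neg]
    congr 1
    ext s
    push_cast
    rw [inv_neg]
  rw [h3] at h2
  have := h2
  set J := ∫ s in -r..r, ((s : ℂ))⁻¹
  have : (2 : ℂ) * J = 0 := by linear_combination -this
  simpa using this

/-- Bound on the Cauchy-kernel integral over a symmetric interval around the real part. -/
lemma norm_intervalIntegral_inv_le (z : ℂ) (hz : z.im ≠ 0) (r : ℝ) :
    ‖∫ t in z.re - r..z.re + r, ((t : ℂ) - z)⁻¹‖ ≤ 2 * π := by
  have key : ∀ t : ℝ, ((t : ℂ) - z) ∈ Complex.slitPlane := by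
    intro t
    rw [Complex.mem_slitPlane_iff]
    right
    simp [hz]
  have hne : ∀ t : ℝ, ((t : ℂ) - z) ≠ 0 := fun t => Complex.slitPlane_ne_zero (key t)
  have hderiv : ∀ t ∈ Set.uIcc (z.re - r) (z.re + r),
      HasDerivAt (fun t : ℝ => Complex.log ((t : ℂ) - z)) (((t : ℂ) - z)⁻¹) t := by
    intro t _
    have h1 : HasDerivAt (fun w : ℂ => Complex.log (w - z)) (((t : ℂ) - z)⁻¹) (t : ℂ) := by
      simpa [Function.comp_def] using (Complex.hasDerivAt_log (key t)).comp (t : ℂ)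
        ((hasDerivAt_id ((t : ℂ))).sub_const z)
    simpa using h1.comp_ofReal
  have hint : IntervalIntegrable (fun t : ℝ => ((t : ℂ) - z)⁻¹) volume
      (z.re - r) (z.re + r) := by
    apply Continuous.intervalIntegrable
    exact ((Complex.continuous_ofReal.sub continuous_const).inv₀ hne)
  rw [intervalIntegral.integral_eq_sub_of_hasDerivAt hderiv hint]
  set w₁ : ℂ := ((z.re + r : ℝ) : ℂ) - z with hw₁
  set w₂ : ℂ := ((z.re - r : ℝ) : ℂ) - z with hw₂
  have hre₁ : w₁.re = r := by simp [hw₁]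
  have hre₂ : w₂.re = -r := by simp [hw₂]
  have him : w₁.im = w₂.im := by simp [hw₁, hw₂]
  have habs : ‖w₁‖ = ‖w₂‖ := by
    rw [Complex.norm_def, Complex.norm_def, Complex.normSq_apply, Complex.normSq_apply,
      hre₁, hre₂, him]
    ring_nf
  have hre0 : (Complex.log w₁ - Complex.log w₂).re = 0 := by
    simp [Complex.sub_re, Complex.log_re, habs]
  calc ‖Complex.log w₁ - Complex.log w₂‖
      ≤ |(Complex.log w₁ - Complex.log w₂).re| + |(Complex.log w₁ - Complex.log w₂).im| := by
        exact Complex.norm_le_abs_re_add_abs_im _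
    _ ≤ 0 + (|w₁.arg| + |w₂.arg|) := by
        rw [hre0, abs_zero]
        gcongr
        rw [Complex.sub_im, Complex.log_im, Complex.log_im]
        exact abs_sub _ _
    _ ≤ 0 + (π + π) := by
        gcongr <;> exact Complex.abs_arg_le_pi _
    _ = 2 * π := by ring

lemma abs_rpow_intervalIntegrable_right {s : ℝ} (hs : -1 < s) {r : ℝ} (hr : 0 ≤ r) :
    IntervalIntegrable (fun x : ℝ => |x| ^ s) volume 0 r := by
  have h := intervalIntegral.intervalIntegrable_rpow' (a := 0) (b := r) hs
  rw [intervalIntegrable_iff_integrableOn_Ioc_of_le hr] at h ⊢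
  exact h.congr_fun (fun x hx => by rw [abs_of_pos hx.1]) measurableSet_Ioc

lemma abs_rpow_intervalIntegrable {s : ℝ} (hs : -1 < s) {r : ℝ} (hr : 0 ≤ r) :
    IntervalIntegrable (fun x : ℝ => |x| ^ s) volume (-r) r := by
  have h1 := abs_rpow_intervalIntegrable_right hs hr
  have h2 : IntervalIntegrable (fun x : ℝ => |x| ^ s) volume (-r) 0 := by
    rw [IntervalIntegrable.iff_comp_neg]
    simpa [abs_neg] using h1.symm
  exact h2.trans h1

open intervalIntegral in
lemma integral_abs_rpow {s : ℝ} (hs : -1 < s) {r : ℝ} (hr : 0 ≤ r) :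
    (∫ x in (-r)..r, |x| ^ s) = 2 * r ^ (s + 1) / (s + 1) := by
  have h1 := abs_rpow_intervalIntegrable_right hs hr
  have h2 : IntervalIntegrable (fun x : ℝ => |x| ^ s) volume (-r) 0 := by
    rw [IntervalIntegrable.iff_comp_neg]
    simpa [abs_neg] using h1.symm
  have hsum := intervalIntegral.integral_add_adjacent_intervals (a := -r) (b := 0) (c := r)
    h2 h1
  have hneg : (∫ x in (-r)..(0:ℝ), |x| ^ s) = ∫ x in (0:ℝ)..r, |x| ^ s := by
    have := intervalIntegral.integral_comp_neg (a := (0:ℝ)) (b := r)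
      (fun x : ℝ => |x| ^ s)
    simpa [abs_neg] using this.symm
  have hval : (∫ x in (0:ℝ)..r, |x| ^ s) = r ^ (s + 1) / (s + 1) := by
    have hcongr : (∫ x in (0:ℝ)..r, |x| ^ s) = ∫ x in (0:ℝ)..r, x ^ s := by
      apply intervalIntegral.integral_congr
      intro x hx
      rw [Set.uIcc_of_le hr] at hx
      simp [abs_of_nonneg hx.1]
    rw [hcongr, integral_rpow (Or.inl hs), Real.zero_rpow (by linarith), sub_zero]
  rw [← hsum, hneg, hval]
  ring

/-- Let `f(x, y, λ) = 1 + (1/(2πi)) ∫ F̃(t, λ)/(t − (x + λy)) dt` for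
`Im λ > 0`, where `F̃(·, λ) ∈ L¹ ∩ L²(ℝ)` uniformly, `‖F̃(·, λ)‖_{L¹∩L²} → 0` as
`|λ| → ∞`, and `F̃(·, λ)` is uniformly Hölder continuous.  Then `f(x, y, λ) → 1`
uniformly in `(x, y)` as `|λ| → ∞`. -/
theorem cauchy_integral_uniform_limit
    {n : ℕ} (F : ℝ → ℂ → Matrix (Fin n) (Fin n) ℂ)
    (hbound : ∃ M : ENNReal, M < ⊤ ∧ ∀ lam : ℂ,
      eLpNorm (fun t => F t lam) 1 (volume : Measure ℝ) ≤ M ∧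
      eLpNorm (fun t => F t lam) 2 (volume : Measure ℝ) ≤ M)
    (hdecay : Tendsto
      (fun lam : ℂ =>
        eLpNorm (fun t => F t lam) 1 (volume : Measure ℝ) +
        eLpNorm (fun t => F t lam) 2 (volume : Measure ℝ))
      (cocompact ℂ) (nhds 0))
    (hHolder : ∃ (α Cα : ℝ), 0 < α ∧ α ≤ 1 ∧ 0 ≤ Cα ∧
      ∀ (lam : ℂ) (t s : ℝ), ‖F t lam - F s lam‖ ≤ Cα * |t - s| ^ α) :
    ∀ η : ℝ, 0 < η → ∃ R : ℝ, ∀ lam : ℂ, R ≤ ‖lam‖ → 0 < lam.im →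
      ∀ x y : ℝ,
        ‖(1 + (2 * π * Complex.I)⁻¹ •
            ∫ t : ℝ, ((t : ℂ) - ((x : ℂ) + lam * (y : ℂ)))⁻¹ • F t lam
          : Matrix (Fin n) (Fin n) ℂ) - 1‖ ≤ η := by
  obtain ⟨α, Cα, hα0, hα1, hCα0, hHolRaw⟩ := hHolder
  letI := matrixContinuousENormAux (m := Fin n) (k := Fin n)
  haveI := matrixPseudoMetrizableAux (m := Fin n) (k := Fin n)
  set C := max Cα 1 with hCdef
  have hC : 0 < C := lt_of_lt_of_le one_pos (le_max_right _ _)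
  have hHol : ∀ (lam : ℂ) (t s : ℝ), ‖F t lam - F s lam‖ ≤ C * |t - s| ^ α := fun lam t s =>
    (hHolRaw lam t s).trans
      (mul_le_mul_of_nonneg_right (le_max_left _ _) (Real.rpow_nonneg (abs_nonneg _) _))
  have hcont : ∀ lam : ℂ, Continuous fun t => F t lam := fun lam =>
    holder_continuous_aux _ hα0 (hHol lam)
  intro η hη
  set ε := η / (6 * π) with hεdef
  have hε : 0 < ε := div_pos hη (by positivity)
  set r := min 1 ((η * α / (6 * C)) ^ (1 / α)) with hrdef
  have hr0 : 0 < r := lt_min one_pos (Real.rpow_pos_of_pos (by positivity) _)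
  have hrpow : 2 * C / α * r ^ α ≤ η / 3 := by
    have h1 : r ^ α ≤ η * α / (6 * C) := by
      have h2 : r ≤ (η * α / (6 * C)) ^ (1 / α) := min_le_right _ _
      calc r ^ α ≤ (((η * α / (6 * C)) ^ (1 / α))) ^ α :=
            Real.rpow_le_rpow hr0.le h2 hα0.le
        _ = η * α / (6 * C) := by
            rw [← Real.rpow_mul (by positivity), one_div, inv_mul_cancel₀ hα0.ne',
              Real.rpow_one]
    calc 2 * C / α * r ^ α ≤ 2 * C / α * (η * α / (6 * C)) := by
          apply mul_le_mul_of_nonneg_left h1 (by positivity)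
      _ = η / 3 := by field_simp; ring
  set κ := min (r * η / 3) (ε * (ε / (2 * C)) ^ (1 / α)) with hκdef
  have hκ : 0 < κ := lt_min (by positivity)
    (mul_pos hε (Real.rpow_pos_of_pos (by positivity) _))
  have hev : ∀ᶠ lam in cocompact ℂ,
      (eLpNorm (fun t => F t lam) 1 volume + eLpNorm (fun t => F t lam) 2 volume)
        < ENNReal.ofReal κ :=
    hdecay.eventually_lt_const (by simp [ENNReal.ofReal_pos, hκ])
  rw [Filter.eventually_iff, mem_cocompact] at hev
  obtain ⟨K, hKc, hKsub⟩ := hev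
  obtain ⟨R₀, hR₀⟩ := hKc.isBounded.subset_closedBall 0
  refine ⟨R₀ + 1, fun lam hlam hlamim x y => ?_⟩
  have hlamK : lam ∉ K := by
    intro hmem
    have := hR₀ hmem
    rw [Metric.mem_closedBall, dist_zero_right] at this
    linarith
  have hsum := hKsub hlamK
  have hL1 : eLpNorm (fun t => F t lam) 1 volume ≤ ENNReal.ofReal κ :=
    le_trans le_self_add (le_of_lt hsum)
  have hmeas := (hcont lam).aestronglyMeasurable (μ := (volume : Measure ℝ))
  have hFint : Integrable (fun t => F t lam) volume := by
    rw [← memLp_one_iff_integrable]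
    exact ⟨hmeas, lt_of_le_of_lt hL1 ENNReal.ofReal_lt_top⟩
  have hL1r : (∫ t, ‖F t lam‖) ≤ κ := by
    have h1 := ofReal_integral_norm_eq_lintegral_enorm hFint
    have h2 : ENNReal.ofReal (∫ t, ‖F t lam‖) ≤ ENNReal.ofReal κ := by
      rw [h1, ← eLpNorm_one_eq_lintegral_enorm]; exact hL1
    exact (ENNReal.ofReal_le_ofReal_iff hκ.le).mp h2
  have hsup : ∀ t : ℝ, ‖F t lam‖ ≤ ε := by
    intro t
    by_contra hcon
    push_neg at hcon
    have hb := pointwise_bound_aux hα0 hC (hHol lam) t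
    have hineq : ENNReal.ofReal (‖F t lam‖ * (‖F t lam‖ / (2 * C)) ^ (1 / α))
        ≤ ENNReal.ofReal (ε * (ε / (2 * C)) ^ (1 / α)) :=
      hb.trans (hL1.trans (ENNReal.ofReal_le_ofReal (min_le_right _ _)))
    have hle := (ENNReal.ofReal_le_ofReal_iff
      (mul_nonneg hε.le (Real.rpow_nonneg (by positivity) _))).mp hineq
    have hmono : ε * (ε / (2 * C)) ^ (1 / α)
        < ‖F t lam‖ * (‖F t lam‖ / (2 * C)) ^ (1 / α) := by
      apply mul_lt_mul'' hcon ?_ hε.le (Real.rpow_nonneg (by positivity) _)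
      exact Real.rpow_lt_rpow (by positivity)
        ((div_lt_div_iff_of_pos_right (by positivity)).mpr hcon) (by positivity)
    linarith
  set z : ℂ := (x : ℂ) + lam * (y : ℂ) with hzdef
  set p : ℝ := x + lam.re * y with hpdef
  have hzre : z.re = p := by
    simp [hzdef, hpdef, Complex.add_re, Complex.mul_re]
  set g : ℝ → Matrix (Fin n) (Fin n) ℂ := fun t => ((t : ℂ) - z)⁻¹ • F t lam with hgdef
  rw [add_sub_cancel_left, norm_smul]
  have hnorm_c : ‖(2 * (π : ℂ) * Complex.I)⁻¹‖ ≤ 1 := by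
    rw [norm_inv]
    have habs : ‖(2 * (π : ℂ) * Complex.I)‖ = 2 * π := by
      simp [norm_mul, Complex.norm_real, Complex.norm_I,
        abs_of_pos Real.pi_pos]
    rw [habs]
    apply inv_le_one_of_one_le₀
    nlinarith [Real.pi_gt_three]
  suffices hmain : ‖∫ t, g t‖ ≤ η by
    calc ‖(2 * (π : ℂ) * Complex.I)⁻¹‖ * ‖∫ t, g t‖ ≤ 1 * η :=
        mul_le_mul hnorm_c hmain (norm_nonneg _) zero_le_one
      _ = η := one_mul η
  by_cases hg : Integrable g volume
  swap
  · rw [integral_undef hg]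
    simp [hη.le]
  set S : Set ℝ := Set.Icc (p - r) (p + r) with hSdef
  have hprle : p - r ≤ p + r := by linarith
  have habs_low : ∀ t : ℝ, |t - p| ≤ ‖(t : ℂ) - z‖ := by
    intro t
    have h1 := Complex.abs_re_le_norm ((t : ℂ) - z)
    simpa [Complex.sub_re, Complex.ofReal_re, hzre] using h1
  have hker_meas : AEStronglyMeasurable (fun t : ℝ => ((t : ℂ) - z)⁻¹) volume :=
    ((Complex.measurable_ofReal.sub measurable_const).inv).aestronglyMeasurable
  set f₁ : ℝ → Matrix (Fin n) (Fin n) ℂ :=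
    fun t => ((t : ℂ) - z)⁻¹ • (F t lam - F p lam) with hf₁def
  have hf₁bound : ∀ t : ℝ, ‖f₁ t‖ ≤ C * |t - p| ^ (α - 1) := by
    intro t
    by_cases ht : t = p
    · have : f₁ t = 0 := by simp [hf₁def, ht]
      rw [this, norm_zero]
      positivity
    · have htp : 0 < |t - p| := abs_pos.mpr (sub_ne_zero.mpr ht)
      rw [hf₁def, norm_smul]
      calc ‖((t : ℂ) - z)⁻¹‖ * ‖F t lam - F p lam‖
          ≤ |t - p|⁻¹ * (C * |t - p| ^ α) := by
            apply mul_le_mul ?_ (hHol lam t p) (norm_nonneg _) (by positivity)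
            rw [norm_inv]
            exact inv_anti₀ htp (habs_low t)
        _ = C * |t - p| ^ (α - 1) := by
            rw [Real.rpow_sub htp, Real.rpow_one]; ring
  have hbound_int : IntegrableOn (fun t : ℝ => C * |t - p| ^ (α - 1)) S volume := by
    have h1 : IntervalIntegrable (fun t : ℝ => |t - p| ^ (α - 1)) volume (p - r) (p + r) := by
      have h2 := (abs_rpow_intervalIntegrable (s := α - 1) (by linarith) hr0.le).comp_sub_right p
      rw [show p - r = -r + p by ring, show p + r = r + p by ring]
      exact h2
    rw [intervalIntegrable_iff_integrableOn_Icc_of_le hprle] at h1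
    exact h1.const_mul C
  have hf₁meas : AEStronglyMeasurable f₁ (volume.restrict S) :=
    (hker_meas.smul ((hcont lam).sub continuous_const).aestronglyMeasurable).restrict
  have hf₁int : IntegrableOn f₁ S volume :=
    Integrable.mono' hbound_int hf₁meas (ae_of_all _ hf₁bound)
  have hf₁val : ‖∫ t in S, f₁ t‖ ≤ η / 3 := by
    have hstep : (∫ t in S, C * |t - p| ^ (α - 1)) = C * (2 * r ^ α / α) := by
      rw [MeasureTheory.integral_const_mul]
      have hIcc : (∫ t in S, |t - p| ^ (α - 1)) =
          ∫ t in (p - r)..(p + r), |t - p| ^ (α - 1) := by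
        rw [hSdef, MeasureTheory.integral_Icc_eq_integral_Ioc,
          intervalIntegral.integral_of_le hprle]
      have hshift := intervalIntegral.integral_comp_sub_right (a := p - r) (b := p + r)
        (fun s : ℝ => |s| ^ (α - 1)) p
      have hend : (∫ t in (p - r)..(p + r), |t - p| ^ (α - 1)) =
          ∫ s in (-r)..r, |s| ^ (α - 1) := by
        rw [hshift]
        congr 1 <;> ring
      rw [hIcc, hend, integral_abs_rpow (by linarith) hr0.le, sub_add_cancel]
    calc ‖∫ t in S, f₁ t‖ ≤ ∫ t in S, C * |t - p| ^ (α - 1) :=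
        norm_integral_le_of_norm_le hbound_int (ae_of_all _ hf₁bound)
      _ = C * (2 * r ^ α / α) := hstep
      _ = 2 * C / α * r ^ α := by ring
      _ ≤ η / 3 := hrpow
  set f₂ : ℝ → Matrix (Fin n) (Fin n) ℂ := fun t => ((t : ℂ) - z)⁻¹ • F p lam with hf₂def
  have hf₂int : IntegrableOn f₂ S volume := by
    have hdiff := hg.integrableOn.sub hf₁int
    apply hdiff.congr
    apply ae_of_all
    intro t
    simp [hgdef, hf₁def, hf₂def, smul_sub]
  have hsplitS : (∫ t in S, g t) = (∫ t in S, f₁ t) + ∫ t in S, f₂ t := by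
    rw [← integral_add hf₁int hf₂int]
    congr 1
    funext t
    rw [hgdef, hf₁def, hf₂def]
    simp [smul_sub]
  have hJ : ‖∫ t in S, ((t : ℂ) - z)⁻¹‖ ≤ 2 * π := by
    have hIoc : (∫ t in S, ((t : ℂ) - z)⁻¹) =
        ∫ t in (p - r)..(p + r), ((t : ℂ) - z)⁻¹ := by
      rw [hSdef, MeasureTheory.integral_Icc_eq_integral_Ioc,
        intervalIntegral.integral_of_le hprle]
    rw [hIoc]
    by_cases hy : y = 0
    · have hz_eq : z = (x : ℂ) := by simp [hzdef, hy]
      have hp_eq : p = x := by simp [hpdef, hy]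
      rw [hz_eq, hp_eq, intervalIntegral_inv_real_zero x r, norm_zero]
      positivity
    · have him0 : z.im ≠ 0 := by
        have : z.im = lam.im * y := by
          simp [hzdef, Complex.add_im, Complex.mul_im]
        rw [this]
        exact mul_ne_zero hlamim.ne' hy
      have := norm_intervalIntegral_inv_le z him0 r
      rwa [hzre] at this
  have hf₂val : ‖∫ t in S, f₂ t‖ ≤ η / 3 := by
    have heq : (∫ t in S, f₂ t) = (∫ t in S, ((t : ℂ) - z)⁻¹) • F p lam :=
      integral_smul_const _ _
    rw [heq, norm_smul]
    calc ‖∫ t in S, ((t : ℂ) - z)⁻¹‖ * ‖F p lam‖ ≤ (2 * π) * ε :=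
        mul_le_mul hJ (hsup p) (norm_nonneg _) (by positivity)
      _ = η / 3 := by rw [hεdef]; field_simp; ring
  have hfar : ‖∫ t in Sᶜ, g t‖ ≤ η / 3 := by
    have hint2 : IntegrableOn (fun t : ℝ => r⁻¹ * ‖F t lam‖) Sᶜ volume :=
      ((hFint.norm).const_mul r⁻¹).integrableOn
    have hbd : ∀ᵐ t ∂(volume.restrict Sᶜ), ‖g t‖ ≤ r⁻¹ * ‖F t lam‖ := by
      rw [ae_restrict_iff' measurableSet_Icc.compl]
      apply ae_of_all
      intro t ht
      have htp : r ≤ |t - p| := by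
        simp only [hSdef, Set.mem_compl_iff, Set.mem_Icc, not_and_or] at ht
        rcases ht with h | h <;> push_neg at h
        · exact le_abs.mpr (Or.inr (by linarith))
        · exact le_abs.mpr (Or.inl (by linarith))
      rw [hgdef, norm_smul]
      apply mul_le_mul ?_ le_rfl (norm_nonneg _) (by positivity)
      rw [norm_inv]
      calc (‖(t : ℂ) - z‖)⁻¹ ≤ |t - p|⁻¹ :=
          inv_anti₀ (lt_of_lt_of_le hr0 htp) (habs_low t)
        _ ≤ r⁻¹ := inv_anti₀ hr0 htp
    calc ‖∫ t in Sᶜ, g t‖ ≤ ∫ t in Sᶜ, r⁻¹ * ‖F t lam‖ :=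
        norm_integral_le_of_norm_le hint2 hbd
      _ ≤ ∫ t, r⁻¹ * ‖F t lam‖ :=
        setIntegral_le_integral ((hFint.norm).const_mul r⁻¹)
          (ae_of_all _ fun t => by positivity)
      _ = r⁻¹ * ∫ t, ‖F t lam‖ := MeasureTheory.integral_const_mul _ _
      _ ≤ r⁻¹ * (r * η / 3) := by
          apply mul_le_mul_of_nonneg_left (hL1r.trans (min_le_left _ _)) (by positivity)
      _ = η / 3 := by field_simp
  calc ‖∫ t, g t‖ = ‖(∫ t in S, g t) + ∫ t in Sᶜ, g t‖ := by
        rw [integral_add_compl measurableSet_Icc hg]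
    _ ≤ ‖∫ t in S, g t‖ + ‖∫ t in Sᶜ, g t‖ := norm_add_le _ _
    _ ≤ (‖∫ t in S, f₁ t‖ + ‖∫ t in S, f₂ t‖) + ‖∫ t in Sᶜ, g t‖ := by
        rw [hsplitS]
        exact add_le_add_left (norm_add_le _ _) _
    _ ≤ (η / 3 + η / 3) + η / 3 := by
        exact add_le_add (add_le_add hf₁val hf₂val) hfar
    _ = η := by ring

end
end
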